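/- For every rooted digraph D with root r and every v ∈ V−r, the set bubb_D(v) of v-bubbles of D is closed under arbitrary unions; in particular bubb_D(v) has a ⊆-largest element, namely the union B_{v,D} of all v-bubbles. -/

import Mathlib

namespace FlamePaper

universe u
variable {V : Type u}

/-- A (nonempty, repetition-free) directed path, given by the list of its vertices;
its edge set consists of the pairs of consecutive vertices. A one-vertex list is the
trivial `v→v` path. -/
structure DiPath (V : Type u) where
  verts : List V
  ne : verts ≠ []
  nodup : verts.Nodup

namespace DiPath
variable (P : DiPath V)
def first : V := P.verts.head P.ne
def last : V := P.verts.getLast P.ne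
def vertexSet : Set V := {x | x ∈ P.verts}
def edges : Set (V × V) := {e | e ∈ P.verts.zip P.verts.tail}
def internal : Set V := P.vertexSet \ {P.first, P.last}
/-- The last edge of `P` (as a set; empty for the trivial path). -/
def lastEdge : Set (V × V) := {e ∈ P.edges | e.2 = P.last}
end DiPath

/-- `P` is a path of the digraph `D`. -/
def IsPathIn (D : Set (V × V)) (P : DiPath V) : Prop := P.edges ⊆ D

/-- `P` is an `a→b` path in `D`. -/
def IsPath (D : Set (V × V)) (a b : V) (P : DiPath V) : Prop :=
  IsPathIn D P ∧ P.first = a ∧ P.last = b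

/-- The set of ingoing edges of `v` in `D`. -/
def inEdges (D : Set (V × V)) (v : V) : Set (V × V) := {e ∈ D | e.2 = v}

/-- The set of outgoing edges of `v` in `D`. -/
def outEdges (D : Set (V × V)) (v : V) : Set (V × V) := {e ∈ D | e.1 = v}

/-- A rooted digraph: the root has no ingoing edges. -/
def IsRooted (D : Set (V × V)) (r : V) : Prop := inEdges D r = ∅

/-- `Ps` is a system of internally disjoint `r→v` paths in `D`: any two distinct
members share exactly the vertices `r` and `v`. -/
def IntDisjSystem (D : Set (V × V)) (r v : V) (Ps : Set (DiPath V)) : Prop :=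
  (∀ P ∈ Ps, IsPath D r v P) ∧
  ∀ P ∈ Ps, ∀ Q ∈ Ps, P ≠ Q → P.vertexSet ∩ Q.vertexSet = {r, v}

/-- `A_last(Ps)`: the set of last edges of the paths in `Ps`. -/
def lastEdges (Ps : Set (DiPath V)) : Set (V × V) := ⋃ P ∈ Ps, P.lastEdge

/-- `𝒢_D(v)`: the set of those `I ⊆ in_D(v)` which arise as the set of last edges
of a system of internally disjoint `r→v` paths of `D`. -/
def GSet (D : Set (V × V)) (r v : V) : Set (Set (V × V)) :=
  {I | ∃ Ps, IntDisjSystem D r v Ps ∧ lastEdges Ps = I}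

/-- `Ps ∈ ℑ_D(v)`: an internally disjoint system of `r→v` paths of `D` from each member
of which one can choose either an internal vertex or an edge so that the resulting set
meets every `r→v` path of `D`. -/
def EMSystem (D : Set (V × V)) (r v : V) (Ps : Set (DiPath V)) : Prop :=
  IntDisjSystem D r v Ps ∧
  ∃ sel : DiPath V → V ⊕ (V × V),
    (∀ P ∈ Ps, (∀ x, sel P = Sum.inl x → x ∈ P.internal) ∧
              (∀ e, sel P = Sum.inr e → e ∈ P.edges)) ∧
    ∀ Q : DiPath V, IsPath D r v Q →
      ∃ P ∈ Ps, (∀ x, sel P = Sum.inl x → x ∈ Q.vertexSet) ∧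
               (∀ e, sel P = Sum.inr e → e ∈ Q.edges)

/-- The path-system `Ps` lies in `L`. -/
def LiesIn (Ps : Set (DiPath V)) (L : Set (V × V)) : Prop := ∀ P ∈ Ps, IsPathIn L P

/-- `L` is a `D`-vertex-large spanning subdigraph of `D`. -/
def IsLarge (D L : Set (V × V)) (r : V) : Prop :=
  L ⊆ D ∧ ∀ v, v ≠ r → ∃ Ps, EMSystem D r v Ps ∧ LiesIn Ps L

/-- `F` is a vertex-flame with root `r`. -/
def IsFlame (F : Set (V × V)) (r : V) : Prop :=
  ∀ v, v ≠ r → inEdges F v ∈ GSet F r v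

/-- `F` is a quasi-vertex-flame with root `r`. -/
def IsQuasiFlame (F : Set (V × V)) (r : V) : Prop :=
  ∀ v, v ≠ r → ∀ I ⊆ inEdges F v, I.Finite → I ∈ GSet F r v

/-- `S` separates `b` from `a` in `D`: every `a→b` path of `D` meets `S`. -/
def Separates (D : Set (V × V)) (a b : V) (S : Set V) : Prop :=
  ∀ P : DiPath V, IsPath D a b P → (P.vertexSet ∩ S).Nonempty

/-- `𝔖_D(v)`: the Erdős–Menger separations corresponding to `v`. -/
def SepSet (D : Set (V × V)) (r v : V) : Set (Set V) :=
  {S | r ∉ S ∧ v ∉ S ∧ Separates (D \ {(r, v)}) r v S ∧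
    ∃ Ps, IntDisjSystem D r v Ps ∧
      ∃ sel : DiPath V → V, (∀ P ∈ Ps, sel P ∈ P.internal) ∧ S = sel '' Ps}

/-- The entrance of `X` with respect to `D`. -/
def entrance (D : Set (V × V)) (X : Set V) : Set V :=
  {v ∈ X | ∃ u, u ∉ X ∧ (u, v) ∈ D}

/-- `int_D(X) = X ∖ ent_D(X)`. -/
def interiorSet (D : Set (V × V)) (X : Set V) : Set V := X \ entrance D X

/-- `B` is a `v`-bubble of `D` (with root `r`): `B ⊆ V − r` and there is a `v`-infan
`{P_u : u ∈ ent_D(B)}` in `D ∩ (B × B)` where `P_u` starts at `u`. -/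
def IsBubble (D : Set (V × V)) (r v : V) (B : Set V) : Prop :=
  r ∉ B ∧
  ∃ F : V → DiPath V,
    (∀ u ∈ entrance D B, IsPath (D ∩ B ×ˢ B) u v (F u)) ∧
    ∀ u ∈ entrance D B, ∀ u' ∈ entrance D B, u ≠ u' →
      (F u).vertexSet ∩ (F u').vertexSet = {v}

/-- `bubb_D(v)`. -/
def bubbles (D : Set (V × V)) (r v : V) : Set (Set V) := {B | IsBubble D r v B}

/-- `B_{v,D}`: the union of all `v`-bubbles of `D`. -/
def maxBubble (D : Set (V × V)) (r v : V) : Set V := ⋃₀ bubbles D r v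

/-- `B_{S,v,D}`: the set of vertices `u` such that every `r→u` path of `D−rv` meets `S`. -/
def Bset (D : Set (V × V)) (r v : V) (S : Set V) : Set V :=
  {u | ∀ P : DiPath V, IsPath (D \ {(r, v)}) r u P → (P.vertexSet ∩ S).Nonempty}

/-- `Ps` is an `r`-fan in `D`: paths of `D` starting at `r`, any two distinct members
having only the vertex `r` in common. -/
def IsRFan (D : Set (V × V)) (r : V) (Ps : Set (DiPath V)) : Prop :=
  (∀ P ∈ Ps, IsPathIn D P ∧ P.first = r) ∧
  ∀ P ∈ Ps, ∀ Q ∈ Ps, P ≠ Q → P.vertexSet ∩ Q.vertexSet = {r}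

/-- The set of first vertices of the paths in `Ps`. -/
def Vfirst (Ps : Set (DiPath V)) : Set V := DiPath.first '' Ps

/-- The set of last vertices of the paths in `Ps`. -/
def Vlast (Ps : Set (DiPath V)) : Set V := DiPath.last '' Ps

/-- `P` is an `X→Y` path in `D`: exactly its first vertex lies in `X` and
exactly its last vertex lies in `Y`. -/
def IsXYPath (D : Set (V × V)) (X Y : Set V) (P : DiPath V) : Prop :=
  IsPathIn D P ∧ P.vertexSet ∩ X = {P.first} ∧ P.vertexSet ∩ Y = {P.last}

/-- `Ps` is a system of pairwise (vertex-)disjoint `X→Y` paths of `D`. -/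
def DisjXYSystem (D : Set (V × V)) (X Y : Set V) (Ps : Set (DiPath V)) : Prop :=
  (∀ P ∈ Ps, IsXYPath D X Y P) ∧
  ∀ P ∈ Ps, ∀ Q ∈ Ps, P ≠ Q → P.vertexSet ∩ Q.vertexSet = ∅

/-- `κ_D(r,v)`: the maximum size of a (finite) system of internally disjoint `r→v`
paths of `D`. -/
noncomputable def kappa (D : Set (V × V)) (r v : V) : ℕ :=
  sSup {n : ℕ | ∃ Ps : Set (DiPath V), IntDisjSystem D r v Ps ∧ Ps.Finite ∧ Ps.ncard = n}
section BubbleUnionAux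
open Classical
variable {V : Type u}

private lemma mem_zip_tail' {l : List V} {a b : V} (h : (a, b) ∈ l.zip l.tail) :
    ∃ i, ∃ hi : i + 1 < l.length, l[i] = a ∧ l[i + 1] = b := by
  obtain ⟨i, hi, hab⟩ := List.mem_iff_getElem.1 h
  have hlen : i + 1 < l.length := by
    simp only [List.length_zip, List.length_tail, lt_min_iff] at hi
    omega
  refine ⟨i, hlen, ?_, ?_⟩
  · rw [List.getElem_zip] at hab
    exact congrArg Prod.fst hab
  · rw [List.getElem_zip] at hab
    have := congrArg Prod.snd hab
    simp only at this
    rw [← this]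
    exact (List.getElem_tail (by simp only [List.length_tail]; omega)).symm

private lemma zip_mem_of_consec {l : List V} {i : ℕ} (hi : i + 1 < l.length) :
    (l[i]'(by omega), l[i+1]) ∈ l.zip l.tail := by
  have hz : i < (l.zip l.tail).length := by
    simp only [List.length_zip, List.length_tail, lt_min_iff]; omega
  have hm := List.getElem_mem hz
  have heq : (l.zip l.tail)[i] = (l[i]'(by omega), l[i+1]) := by
    rw [List.getElem_zip]
    exact congrArg _ (List.getElem_tail (by simp only [List.length_tail]; omega))
  rwa [heq] at hm


/-- A successor structure witnessing bubblehood. -/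
structure Guide (D : Set (V × V)) (v : V) (B W : Set V) (s : V → V) : Prop where
  subB : W ⊆ B
  ent_sub : entrance D B ⊆ W
  step : ∀ x ∈ W, x ≠ v → (x, s x) ∈ D ∧ s x ∈ W
  inj : ∀ x ∈ W, ∀ y ∈ W, x ≠ v → y ≠ v → s x = s y → s x = v ∨ x = y
  not_ent : ∀ x ∈ W, x ≠ v → s x ∈ entrance D B → s x = v
  reach : ∀ x ∈ W, ∃ n, s^[n] x = v

variable {D : Set (V × V)} {r v : V} {B W : Set V} {s : V → V}

private lemma Guide.iter_mem (hG : Guide D v B W s) {x : V} (hx : x ∈ W) {n : ℕ}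
    (hmin : ∀ k < n, s^[k] x ≠ v) : ∀ i ≤ n, s^[i] x ∈ W := by
  intro i hi
  induction i with
  | zero => simpa using hx
  | succ k ih =>
      have hkW := ih (le_of_lt (Nat.lt_of_succ_le hi))
      have hkv : s^[k] x ≠ v := hmin k (Nat.lt_of_succ_le hi)
      have := (hG.step _ hkW hkv).2
      simpa [Function.iterate_succ_apply'] using this

private lemma iter_ne {x : V} {n : ℕ} (hn : s^[n] x = v) (hmin : ∀ k < n, s^[k] x ≠ v)
    {i j : ℕ} (hij : i < j) (hj : j ≤ n) : s^[i] x ≠ s^[j] x := by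
  intro he
  have h1 : s^[n - j + i] x = v := by
    have h2 : s^[n - j] (s^[i] x) = s^[n - j] (s^[j] x) := by rw [he]
    rw [← Function.iterate_add_apply, ← Function.iterate_add_apply] at h2
    have h3 : n - j + j = n := Nat.sub_add_cancel hj
    rw [h3, hn] at h2
    exact h2
  exact hmin _ (by omega) h1

private lemma Guide.reach_transfer (hG : Guide D v B W s) {s' : V → V}
    (hagree : ∀ x ∈ W, s' x = s x) {x : V} (hx : x ∈ W) : ∃ n, s'^[n] x = v := by
  classical
  obtain ⟨n0, hn0⟩ := hG.reach x hx
  have hex : ∃ n, s^[n] x = v := ⟨n0, hn0⟩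
  set n := Nat.find hex with hndef
  have hn : s^[n] x = v := Nat.find_spec hex
  have hmin : ∀ k < n, s^[k] x ≠ v := fun k hk => Nat.find_min hex hk
  refine ⟨n, ?_⟩
  have key : ∀ i ≤ n, s'^[i] x = s^[i] x := by
    intro i hi
    induction i with
    | zero => rfl
    | succ k ih =>
        have hkW : s^[k] x ∈ W := hG.iter_mem hx hmin k (le_of_lt (Nat.lt_of_succ_le hi))
        rw [Function.iterate_succ_apply', Function.iterate_succ_apply',
          ih (le_of_lt (Nat.lt_of_succ_le hi)), hagree _ hkW]
  rw [key n le_rfl]; exact hn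

private lemma Guide.meet_eq (hG : Guide D v B W s) {u u' : V}
    (hu : u ∈ entrance D B) (hu' : u' ∈ entrance D B) (huu : u ≠ u')
    {n m : ℕ} (hn : s^[n] u = v) (hmin : ∀ k < n, s^[k] u ≠ v)
    (hm : s^[m] u' = v) (hmin' : ∀ k < m, s^[k] u' ≠ v) :
    ∀ N i j, i + j ≤ N → i ≤ n → j ≤ m → s^[i] u = s^[j] u' → s^[i] u = v := by
  have huW : u ∈ W := hG.ent_sub hu
  have huW' : u' ∈ W := hG.ent_sub hu'
  intro N
  induction N with
  | zero =>
      intro i j hN hi hj he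
      have hi0 : i = 0 := by omega
      have hj0 : j = 0 := by omega
      subst hi0; subst hj0
      simp only [Function.iterate_zero_apply] at he
      exact absurd he huu
  | succ N ih =>
      intro i j hN hi hj he
      match i, j with
      | 0, 0 =>
          simp only [Function.iterate_zero_apply] at he
          exact absurd he huu
      | 0, j + 1 =>
          simp only [Function.iterate_zero_apply] at he ⊢
          have hbW : s^[j] u' ∈ W := hG.iter_mem huW' hmin' j (by omega)
          have hbv : s^[j] u' ≠ v := hmin' j (by omega)
          have hsb : s (s^[j] u') = u := by
            rw [← Function.iterate_succ_apply' s j u']; exact he.symm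
          have := hG.not_ent _ hbW hbv (by rw [hsb]; exact hu)
          rw [hsb] at this
          exact this
      | i + 1, 0 =>
          simp only [Function.iterate_zero_apply] at he
          have haW : s^[i] u ∈ W := hG.iter_mem huW hmin i (by omega)
          have hav : s^[i] u ≠ v := hmin i (by omega)
          have hsa : s (s^[i] u) = u' := by
            rw [← Function.iterate_succ_apply' s i u]; exact he
          have := hG.not_ent _ haW hav (by rw [hsa]; exact hu')
          rw [hsa] at this
          rw [Function.iterate_succ_apply' s i u, hsa]
          exact this
      | i + 1, j + 1 =>
          have haW : s^[i] u ∈ W := hG.iter_mem huW hmin i (by omega)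
          have hav : s^[i] u ≠ v := hmin i (by omega)
          have hbW : s^[j] u' ∈ W := hG.iter_mem huW' hmin' j (by omega)
          have hbv : s^[j] u' ≠ v := hmin' j (by omega)
          have hss : s (s^[i] u) = s (s^[j] u') := by
            rw [← Function.iterate_succ_apply' s i u, ← Function.iterate_succ_apply' s j u']
            exact he
          rcases hG.inj _ haW _ hbW hav hbv hss with h1 | h1
          · rw [Function.iterate_succ_apply' s i u, h1]
          · exfalso
            exact hav (ih i j (by omega) (by omega) (by omega) h1)

/-- The list `[u, s u, s² u, …, s^[n] u]`. -/
private def trajList (s : V → V) (u : V) (n : ℕ) : List V :=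
  (List.range (n + 1)).map (fun i => s^[i] u)

private lemma trajList_length (s : V → V) (u : V) (n : ℕ) :
    (trajList s u n).length = n + 1 := by simp [trajList]

private lemma trajList_ne (s : V → V) (u : V) (n : ℕ) : trajList s u n ≠ [] := by
  simp [trajList, List.range_succ]

private lemma trajList_getElem (s : V → V) (u : V) (n : ℕ) {i : ℕ}
    (hi : i < (trajList s u n).length) : (trajList s u n)[i] = s^[i] u := by
  simp only [trajList, List.getElem_map, List.getElem_range]

private lemma trajList_mem {s : V → V} {u : V} {n : ℕ} {y : V}
    (hy : y ∈ trajList s u n) : ∃ i ≤ n, y = s^[i] u := by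
  simp only [trajList, List.mem_map, List.mem_range] at hy
  obtain ⟨i, hi, rfl⟩ := hy
  exact ⟨i, by omega, rfl⟩

private lemma trajList_nodup {s : V → V} {u v : V} {n : ℕ}
    (hn : s^[n] u = v) (hmin : ∀ k < n, s^[k] u ≠ v) : (trajList s u n).Nodup := by
  refine List.Nodup.map_on ?_ List.nodup_range
  intro i hi j hj he
  simp only [List.mem_range] at hi hj
  by_contra hne
  rcases Nat.lt_or_ge i j with h | h
  · exact iter_ne hn hmin h (by omega) he
  · exact iter_ne hn hmin (by omega : j < i) (by omega) he.symm

private lemma Guide.toBubble (hG : Guide D v B W s) (hr : r ∉ B) : IsBubble D r v B := by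
  classical
  refine ⟨hr, ?_⟩
  have hWent : ∀ u, u ∈ entrance D B → u ∈ W := fun u hu => hG.ent_sub hu
  -- minimal reach number
  have hrch : ∀ u ∈ entrance D B, ∃ n, s^[n] u = v := fun u hu => hG.reach u (hWent u hu)
  let nn : V → ℕ := fun u => if hu : u ∈ entrance D B then Nat.find (hrch u hu) else 0
  have hnn : ∀ u, (hu : u ∈ entrance D B) → s^[nn u] u = v ∧ ∀ k < nn u, s^[k] u ≠ v := by
    intro u hu
    constructor
    · simpa only [nn, dif_pos hu] using Nat.find_spec (hrch u hu)
    · intro k hk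
      simp only [nn, dif_pos hu] at hk
      simpa only [nn, dif_pos hu] using Nat.find_min (hrch u hu) hk
  let F : V → DiPath V := fun u =>
    if hu : u ∈ entrance D B then
      ⟨trajList s u (nn u), trajList_ne s u (nn u),
        trajList_nodup (hnn u hu).1 (hnn u hu).2⟩
    else ⟨[u], by simp, by simp⟩
  have hFverts : ∀ u, (hu : u ∈ entrance D B) → (F u).verts = trajList s u (nn u) := by
    intro u hu; simp only [F, dif_pos hu]
  have hFmem : ∀ u, (hu : u ∈ entrance D B) → ∀ y ∈ (F u).vertexSet, ∃ i ≤ nn u, y = s^[i] u := by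
    intro u hu y hy
    rw [DiPath.vertexSet, Set.mem_setOf_eq, hFverts u hu] at hy
    exact trajList_mem hy
  have hfirst : ∀ u, (hu : u ∈ entrance D B) → (F u).first = u := by
    intro u hu
    simp only [DiPath.first, F, dif_pos hu]
    rw [List.head_eq_getElem, trajList_getElem s u (nn u) (by rw [trajList_length]; omega)]
    rfl
  have hlast : ∀ u, (hu : u ∈ entrance D B) → (F u).last = v := by
    intro u hu
    simp only [DiPath.last, F, dif_pos hu]
    rw [List.getLast_eq_getElem, trajList_getElem s u (nn u)
      (by rw [trajList_length]; omega)]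
    rw [trajList_length]
    simpa using (hnn u hu).1
  refine ⟨F, ?_, ?_⟩
  · intro u hu
    refine ⟨?_, hfirst u hu, hlast u hu⟩
    rintro ⟨a, b⟩ he
    rw [DiPath.edges, Set.mem_setOf_eq, hFverts u hu] at he
    obtain ⟨i, hlen, h1, h2⟩ := mem_zip_tail' he
    rw [trajList_getElem s u (nn u)] at h1 h2
    rw [trajList_length] at hlen
    have hiW : s^[i] u ∈ W := hG.iter_mem (hWent u hu) (hnn u hu).2 i (by omega)
    have hiv : s^[i] u ≠ v := (hnn u hu).2 i (by omega)
    have hi1W : s^[i+1] u ∈ W := hG.iter_mem (hWent u hu) (hnn u hu).2 (i+1) (by omega)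
    have hst := hG.step _ hiW hiv
    subst h1 h2
    constructor
    · rw [Function.iterate_succ_apply' s i u]
      exact hst.1
    · exact ⟨hG.subB hiW, hG.subB hi1W⟩
  · intro u hu u' hu' huu
    apply Set.Subset.antisymm
    · rintro x ⟨hx, hx'⟩
      obtain ⟨i, hi, rfl⟩ := hFmem u hu x hx
      obtain ⟨j, hj, hej⟩ := hFmem u' hu' _ hx'
      exact hG.meet_eq hu hu' huu (hnn u hu).1 (hnn u hu).2 (hnn u' hu').1 (hnn u' hu').2
        (i + j) i j le_rfl hi hj hej
    · rintro x (rfl : x = v)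
      constructor
      · have := List.getLast_mem (F u).ne
        rw [← DiPath.last, hlast u hu] at this
        exact this
      · have := List.getLast_mem (F u').ne
        rw [← DiPath.last, hlast u' hu'] at this
        exact this

private noncomputable def nxt (l : List V) (x : V) : V := l.getD (l.idxOf x + 1) x

private lemma nxt_spec {l : List V} (hnd : l.Nodup) (hne : l ≠ []) {x : V} (hx : x ∈ l)
    (hxl : x ≠ l.getLast hne) :
    ∃ i, ∃ hi : i + 1 < l.length, l[i] = x ∧ l[i + 1] = nxt l x := by
  have hidx : l.idxOf x < l.length := List.idxOf_lt_length_iff.2 hx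
  have hlt : l.idxOf x + 1 < l.length := by
    rcases Nat.lt_or_ge (l.idxOf x + 1) l.length with h | h
    · exact h
    · exfalso
      apply hxl
      have h2 : l[l.idxOf x]'hidx = l[l.length - 1]'(by omega) := by congr 1; omega
      rw [List.getElem_idxOf] at h2
      rw [List.getLast_eq_getElem]
      exact h2
  refine ⟨l.idxOf x, hlt, List.getElem_idxOf hidx, ?_⟩
  rw [nxt, List.getD_eq_getElem l x hlt]

private lemma IsBubble.toGuide {C : Set V} (hB : IsBubble D r v C) :
    ∃ W s, Guide D v C W s := by
  classical
  obtain ⟨hr, F, hF1, hF2⟩ := hB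
  have hlastv : ∀ u, u ∈ entrance D C → (F u).last = v := fun u hu => (hF1 u hu).2.2
  have hfirstu : ∀ u, u ∈ entrance D C → (F u).first = u := fun u hu => (hF1 u hu).2.1
  have hedges : ∀ u, u ∈ entrance D C → (F u).edges ⊆ D ∩ C ×ˢ C := fun u hu => (hF1 u hu).1
  have hgetLast : ∀ u, u ∈ entrance D C → (F u).verts.getLast (F u).ne = v :=
    fun u hu => hlastv u hu
  have hconsec : ∀ u, u ∈ entrance D C → ∀ i, (hi : i + 1 < (F u).verts.length) →
      ((F u).verts[i], (F u).verts[i+1]) ∈ D ∩ C ×ˢ C := by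
    intro u hu i hi
    exact hedges u hu (zip_mem_of_consec hi)
  have hvertsC : ∀ u, u ∈ entrance D C → ∀ x ∈ (F u).verts, x ∈ C := by
    intro u hu x hx
    obtain ⟨i, hi, rfl⟩ := List.mem_iff_getElem.1 hx
    match i, hi with
    | 0, hi =>
        have h0 : (F u).verts[0] = (F u).first := (List.head_eq_getElem (F u).ne).symm
        rw [h0, hfirstu u hu]
        exact hu.1
    | i + 1, hi =>
        exact (hconsec u hu i hi).2.2
  set W : Set V := ⋃ u ∈ entrance D C, (F u).vertexSet with hWdef
  have hWmem : ∀ x, x ∈ W ↔ ∃ u, u ∈ entrance D C ∧ x ∈ (F u).verts := by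
    intro x
    simp only [hWdef, Set.mem_iUnion, DiPath.vertexSet, Set.mem_setOf_eq, exists_prop]
  have huniq : ∀ x, x ≠ v → ∀ u, u ∈ entrance D C → x ∈ (F u).verts →
      ∀ u', u' ∈ entrance D C → x ∈ (F u').verts → u = u' := by
    intro x hxv u hu hxu u' hu' hxu'
    by_contra hne
    have h1 := hF2 u hu u' hu' hne
    have hxm : x ∈ ({v} : Set V) := h1 ▸ (⟨hxu, hxu'⟩ : x ∈ (F u).vertexSet ∩ (F u').vertexSet)
    exact hxv hxm
  set s : V → V := fun x =>
    if h : ∃ u, u ∈ entrance D C ∧ x ∈ (F u).verts ∧ x ≠ v then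
      nxt (F h.choose).verts x
    else x with hsdef
  have hs_eq : ∀ u, u ∈ entrance D C → ∀ x ∈ (F u).verts, x ≠ v →
      s x = nxt (F u).verts x := by
    intro u hu x hx hxv
    have hex : ∃ u, u ∈ entrance D C ∧ x ∈ (F u).verts ∧ x ≠ v := ⟨u, hu, hx, hxv⟩
    obtain ⟨hc1, hc2, _⟩ := hex.choose_spec
    have he : hex.choose = u := huniq x hxv _ hc1 hc2 u hu hx
    simp only [hsdef, dif_pos hex, he]
  -- key: structure of s on a member
  have hstep : ∀ u, u ∈ entrance D C → ∀ x ∈ (F u).verts, x ≠ v →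
      ∃ i, ∃ hi : i + 1 < (F u).verts.length, (F u).verts[i] = x ∧ (F u).verts[i+1] = s x := by
    intro u hu x hx hxv
    rw [hs_eq u hu x hx hxv]
    exact nxt_spec (F u).nodup (F u).ne hx (by rw [hgetLast u hu]; exact hxv)
  refine ⟨W, s, ?_, ?_, ?_, ?_, ?_, ?_⟩
  · intro x hx
    obtain ⟨u, hu, hxu⟩ := (hWmem x).1 hx
    exact hvertsC u hu x hxu
  · intro u hu
    rw [hWmem]
    refine ⟨u, hu, ?_⟩
    have := List.head_mem (F u).ne
    rwa [← DiPath.first, hfirstu u hu] at this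
  · intro x hx hxv
    obtain ⟨u, hu, hxu⟩ := (hWmem x).1 hx
    obtain ⟨i, hi, h1, h2⟩ := hstep u hu x hxu hxv
    have hm := hconsec u hu i hi
    rw [h1, h2] at hm
    refine ⟨hm.1, ?_⟩
    rw [hWmem]
    exact ⟨u, hu, h2 ▸ List.getElem_mem hi⟩
  · intro x hx y hy hxv hyv hsxy
    obtain ⟨u, hu, hxu⟩ := (hWmem x).1 hx
    obtain ⟨u', hu', hyu⟩ := (hWmem y).1 hy
    by_cases hz : s x = v
    · exact Or.inl hz
    right
    obtain ⟨i, hi, h1, h2⟩ := hstep u hu x hxu hxv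
    obtain ⟨j, hj, h3, h4⟩ := hstep u' hu' y hyu hyv
    have hzu : s x ∈ (F u).verts := h2 ▸ List.getElem_mem hi
    have hzu' : s x ∈ (F u').verts := by rw [hsxy]; exact h4 ▸ List.getElem_mem hj
    have he : u = u' := huniq _ hz u hu hzu u' hu' hzu'
    subst he
    have hij : i + 1 = j + 1 := by
      apply (F u).nodup.getElem_inj_iff.mp
      rw [h2, h4, hsxy]
    have : i = j := by omega
    subst this
    rw [← h1, ← h3]
  · intro x hx hxv hent
    obtain ⟨u, hu, hxu⟩ := (hWmem x).1 hx
    by_contra hz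
    obtain ⟨i, hi, h1, h2⟩ := hstep u hu x hxu hxv
    have hzu : s x ∈ (F u).verts := h2 ▸ List.getElem_mem hi
    have hzfst : s x ∈ (F (s x)).verts := by
      have := List.head_mem (F (s x)).ne
      rwa [← DiPath.first, hfirstu _ hent] at this
    have he : u = s x := huniq _ hz u hu hzu _ hent hzfst
    have h0 : (F u).verts[0]'(by omega) = u := by
      have h00 := (List.head_eq_getElem (F u).ne).symm
      rw [h00, ← DiPath.first, hfirstu u hu]
    have : (F u).verts[i+1] = (F u).verts[0]'(by omega) := by rw [h2, h0, ← he]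
    have := (F u).nodup.getElem_inj_iff.mp this
    omega
  · intro x hx
    obtain ⟨u, hu, hxu⟩ := (hWmem x).1 hx
    obtain ⟨i, hi, rfl⟩ := List.mem_iff_getElem.1 hxu
    have hk : i + ((F u).verts.length - 1 - i) + 1 = (F u).verts.length := by omega
    clear hxu hx
    generalize hkk : (F u).verts.length - 1 - i = k at hk
    clear hkk
    induction k generalizing i with
    | zero =>
        refine ⟨0, ?_⟩
        simp only [Function.iterate_zero_apply]
        have hgi : (F u).verts[i] = (F u).verts.getLast (F u).ne := by
          rw [List.getLast_eq_getElem]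
          congr 1
          omega
        rw [hgi]
        exact hgetLast u hu
    | succ k ih =>
        have hxv : (F u).verts[i] ≠ v := by
          intro hcon
          have hgi : (F u).verts[(F u).verts.length - 1]'(by omega) =
              (F u).verts.getLast (F u).ne := by
            rw [List.getLast_eq_getElem]
          have h5 : (F u).verts[i] = (F u).verts[(F u).verts.length - 1]'(by omega) := by
            rw [hcon, hgi, hgetLast u hu]
          have := (F u).nodup.getElem_inj_iff.mp h5
          omega
        obtain ⟨j, hj, h1, h2⟩ := hstep u hu _ (List.getElem_mem hi) hxv
        have hji : j = i := (F u).nodup.getElem_inj_iff.mp h1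
        subst hji
        obtain ⟨m, hm⟩ := ih (j + 1) (by omega) (by omega)
        refine ⟨m + 1, ?_⟩
        rw [Function.iterate_succ_apply, ← h2]
        exact hm

private lemma guide_union {B₁ B₂ W₁ W₂ : Set V} {s₁ s₂ : V → V}
    (h₁ : Guide D v B₁ W₁ s₁) (h₂ : Guide D v B₂ W₂ s₂) :
    Guide D v (B₁ ∪ B₂) (W₁ ∪ (W₂ \ B₁))
      (fun x => if x ∈ W₁ then s₁ x else s₂ x) := by
  classical
  set s' : V → V := fun x => if x ∈ W₁ then s₁ x else s₂ x with hs'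
  have hag₁ : ∀ x ∈ W₁, s' x = s₁ x := fun x hx => if_pos hx
  have hag₂ : ∀ x, x ∉ W₁ → s' x = s₂ x := fun x hx => if_neg hx
  constructor
  · rintro x (hx | hx)
    · exact Or.inl (h₁.subB hx)
    · exact Or.inr (h₂.subB hx.1)
  · rintro u ⟨huB, w, hw, hwD⟩
    rcases huB with hu1 | hu2
    · exact Or.inl (h₁.ent_sub ⟨hu1, w, fun hc => hw (Or.inl hc), hwD⟩)
    · by_cases hb : u ∈ B₁
      · exact Or.inl (h₁.ent_sub ⟨hb, w, fun hc => hw (Or.inl hc), hwD⟩)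
      · exact Or.inr ⟨h₂.ent_sub ⟨hu2, w, fun hc => hw (Or.inr hc), hwD⟩, hb⟩
  · rintro x (hx | hx) hxv
    · rw [hag₁ x hx]
      exact ⟨(h₁.step x hx hxv).1, Or.inl (h₁.step x hx hxv).2⟩
    · have hx1 : x ∉ W₁ := fun h => hx.2 (h₁.subB h)
      rw [hag₂ x hx1]
      have hst := h₂.step x hx.1 hxv
      refine ⟨hst.1, ?_⟩
      by_cases hb : s₂ x ∈ B₁
      · exact Or.inl (h₁.ent_sub ⟨hb, x, hx.2, hst.1⟩)
      · exact Or.inr ⟨hst.2, hb⟩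
  · rintro x hx y hy hxv hyv he
    have key : ∀ a b : V, a ∈ W₁ → b ∈ W₂ \ B₁ → b ∉ W₁ → s₁ a = s₂ b →
        a ≠ v → b ≠ v → s₁ a = v := by
      intro a b haW hbW hbW1 hab hav hbv
      by_contra hzv
      have hzB : s₁ a ∈ B₁ := h₁.subB (h₁.step a haW hav).2
      have hent : s₁ a ∈ entrance D B₁ := ⟨hzB, b, hbW.2, hab ▸ (h₂.step b hbW.1 hbv).1⟩
      exact hzv (h₁.not_ent a haW hav hent)
    rcases hx with hx | hx <;> rcases hy with hy | hy
    · rw [hag₁ x hx, hag₁ y hy] at he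
      rw [hag₁ x hx]
      exact h₁.inj x hx y hy hxv hyv he
    · have hy1 : y ∉ W₁ := fun h => hy.2 (h₁.subB h)
      rw [hag₁ x hx, hag₂ y hy1] at he
      rw [hag₁ x hx]
      exact Or.inl (key x y hx hy hy1 he hxv hyv)
    · have hx1 : x ∉ W₁ := fun h => hx.2 (h₁.subB h)
      rw [hag₂ x hx1, hag₁ y hy] at he
      rw [hag₂ x hx1]
      exact Or.inl (he.trans (key y x hy hx hx1 he.symm hyv hxv))
    · have hx1 : x ∉ W₁ := fun h => hx.2 (h₁.subB h)
      have hy1 : y ∉ W₁ := fun h => hy.2 (h₁.subB h)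
      rw [hag₂ x hx1, hag₂ y hy1] at he
      rw [hag₂ x hx1]
      exact h₂.inj x hx.1 y hy.1 hxv hyv he
  · rintro x hx hxv hent
    rcases hx with hx | hx
    · rw [hag₁ x hx] at hent ⊢
      obtain ⟨hzB, w, hw, hwD⟩ := hent
      exact h₁.not_ent x hx hxv
        ⟨h₁.subB (h₁.step x hx hxv).2, w, fun hc => hw (Or.inl hc), hwD⟩
    · have hx1 : x ∉ W₁ := fun h => hx.2 (h₁.subB h)
      rw [hag₂ x hx1] at hent ⊢
      obtain ⟨hzB, w, hw, hwD⟩ := hent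
      exact h₂.not_ent x hx.1 hxv
        ⟨h₂.subB (h₂.step x hx.1 hxv).2, w, fun hc => hw (Or.inr hc), hwD⟩
  · have main : ∀ n x, x ∈ W₂ → x ∉ B₁ → s₂^[n] x = v → ∃ m, s'^[m] x = v := by
      intro n
      induction n with
      | zero => exact fun x _ _ h => ⟨0, h⟩
      | succ n ih =>
          intro x hx hxB h
          by_cases hxv : x = v
          · exact ⟨0, hxv⟩
          · have hx1 : x ∉ W₁ := fun h' => hxB (h₁.subB h')
            have hstep := h₂.step x hx hxv
            have hy : s₂^[n] (s₂ x) = v := by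
              rw [← Function.iterate_succ_apply]; exact h
            have hsx : s' x = s₂ x := hag₂ x hx1
            by_cases hyB : s₂ x ∈ B₁
            · have hentB : s₂ x ∈ entrance D B₁ := ⟨hyB, x, hxB, hstep.1⟩
              obtain ⟨m, hm⟩ := h₁.reach_transfer hag₁ (h₁.ent_sub hentB)
              refine ⟨m + 1, ?_⟩
              rw [Function.iterate_succ_apply, hsx]
              exact hm
            · obtain ⟨m, hm⟩ := ih (s₂ x) hstep.2 hyB hy
              refine ⟨m + 1, ?_⟩
              rw [Function.iterate_succ_apply, hsx]
              exact hm
    rintro x (hx | hx)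
    · exact h₁.reach_transfer hag₁ hx
    · obtain ⟨n, hn⟩ := h₂.reach x hx.1
      exact main n x hx.1 hx.2 hn

private lemma guide_sUnion {S : Set (Set V)}
    (hS : ∀ C ∈ S, ∃ W s, Guide D v C W s) :
    ∃ W s, Guide D v (⋃₀ S) W s := by
  classical
  let α := {p : Set (Set V) × Set V × (V → V) // p.1 ⊆ S ∧ Guide D v (⋃₀ p.1) p.2.1 p.2.2}
  let le : α → α → Prop := fun p q =>
    p.1.1 ⊆ q.1.1 ∧ p.1.2.1 ⊆ q.1.2.1 ∧ ∀ x ∈ p.1.2.1, q.1.2.2 x = p.1.2.2 x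
  have hempty : Guide D v (⋃₀ (∅ : Set (Set V))) ∅ id := by
    constructor <;> simp [entrance]
  have htrans : ∀ {p q t : α}, le p q → le q t → le p t := by
    rintro p q t ⟨h1, h2, h3⟩ ⟨h4, h5, h6⟩
    exact ⟨h1.trans h4, h2.trans h5, fun x hx => (h6 x (h2 hx)).trans (h3 x hx)⟩
  have hchain : ∀ c : Set α, IsChain le c → ∃ ub, ∀ a ∈ c, le a ub := by
    intro c hc
    by_cases hce : c.Nonempty
    case neg => exact ⟨⟨(∅, ∅, id), by simp, hempty⟩, fun a ha => absurd ⟨a, ha⟩ hce⟩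
    set A : Set (Set V) := ⋃ p ∈ c, p.1.1 with hA
    set Wc : Set V := ⋃ p ∈ c, p.1.2.1 with hWc
    set sc : V → V :=
      fun x => if h : ∃ p : α, p ∈ c ∧ x ∈ p.1.2.1 then h.choose.1.2.2 x else x with hsc
    have hWcmem : ∀ x, x ∈ Wc ↔ ∃ p : α, p ∈ c ∧ x ∈ p.1.2.1 := by
      intro x
      simp only [hWc, Set.mem_iUnion, exists_prop]
    have hsub : ∀ p : α, p ∈ c → ⋃₀ p.1.1 ⊆ ⋃₀ A :=
      fun p hp => Set.sUnion_mono (Set.subset_biUnion_of_mem (u := fun p : α => p.1.1) hp)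
    have hcompat : ∀ p : α, p ∈ c → ∀ x ∈ p.1.2.1, sc x = p.1.2.2 x := by
      intro p hp x hx
      have hex : ∃ q : α, q ∈ c ∧ x ∈ q.1.2.1 := ⟨p, hp, hx⟩
      simp only [hsc, dif_pos hex]
      obtain ⟨hq, hxq⟩ := hex.choose_spec
      by_cases hpq : hex.choose = p
      · rw [hpq]
      · rcases hc hq hp hpq with h | h
        · exact (h.2.2 x hxq).symm
        · exact h.2.2 x hx
    have hentA : ∀ p : α, p ∈ c → ∀ z ∈ ⋃₀ p.1.1,
        z ∈ entrance D (⋃₀ A) → z ∈ entrance D (⋃₀ p.1.1) := by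
      rintro p hp z hz ⟨_, w, hw, hwD⟩
      exact ⟨hz, w, fun hc' => hw (hsub p hp hc'), hwD⟩
    have hG : Guide D v (⋃₀ A) Wc sc := by
      constructor
      · intro x hx
        obtain ⟨p, hp, hxp⟩ := (hWcmem x).1 hx
        exact hsub p hp (p.2.2.subB hxp)
      · rintro u ⟨hu, w, hw, hwD⟩
        obtain ⟨T, hT, huT⟩ := hu
        obtain ⟨p, hp, hTp⟩ := by
          simpa only [hA, Set.mem_iUnion, exists_prop] using hT
        have : u ∈ entrance D (⋃₀ p.1.1) :=
          ⟨⟨T, hTp, huT⟩, w, fun hc' => hw (hsub p hp hc'), hwD⟩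
        rw [hWcmem]
        exact ⟨p, hp, p.2.2.ent_sub this⟩
      · intro x hx hxv
        obtain ⟨p, hp, hxp⟩ := (hWcmem x).1 hx
        rw [hcompat p hp x hxp]
        have hst := p.2.2.step x hxp hxv
        refine ⟨hst.1, ?_⟩
        rw [hWcmem]
        exact ⟨p, hp, hst.2⟩
      · intro x hx y hy hxv hyv he
        obtain ⟨p, hp, hxp⟩ := (hWcmem x).1 hx
        obtain ⟨q, hq, hyq⟩ := (hWcmem y).1 hy
        obtain ⟨t, ht, hxt, hyt⟩ : ∃ t : α, t ∈ c ∧ x ∈ t.1.2.1 ∧ y ∈ t.1.2.1 := by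
          by_cases hpq : p = q
          · exact ⟨p, hp, hxp, hpq ▸ hyq⟩
          · rcases hc hp hq hpq with h | h
            · exact ⟨q, hq, h.2.1 hxp, hyq⟩
            · exact ⟨p, hp, hxp, h.2.1 hyq⟩
        rw [hcompat t ht x hxt, hcompat t ht y hyt] at he
        rw [hcompat t ht x hxt]
        exact t.2.2.inj x hxt y hyt hxv hyv he
      · intro x hx hxv hent
        obtain ⟨p, hp, hxp⟩ := (hWcmem x).1 hx
        rw [hcompat p hp x hxp] at hent ⊢
        exact p.2.2.not_ent x hxp hxv
          (hentA p hp _ (p.2.2.subB (p.2.2.step x hxp hxv).2) hent)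
      · intro x hx
        obtain ⟨p, hp, hxp⟩ := (hWcmem x).1 hx
        exact p.2.2.reach_transfer (hcompat p hp) hxp
    refine ⟨⟨(A, Wc, sc), ?_, hG⟩, ?_⟩
    · intro T hT
      obtain ⟨p, hp, hTp⟩ := by
        simpa only [hA, Set.mem_iUnion, exists_prop] using hT
      exact p.2.1 hTp
    · intro p hp
      exact ⟨Set.subset_biUnion_of_mem (u := fun p : α => p.1.1) hp,
        Set.subset_biUnion_of_mem (u := fun p : α => p.1.2.1) hp, hcompat p hp⟩
  obtain ⟨m, hm⟩ := exists_maximal_of_chains_bounded hchain (fun {a b c} => htrans)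
  have hms : m.1.1 = S := by
    apply Set.Subset.antisymm m.2.1
    intro C hC
    by_contra hCm
    obtain ⟨W₂, s₂, hG₂⟩ := hS C hC
    have hmerge := guide_union m.2.2 hG₂
    have hBeq : ⋃₀ m.1.1 ∪ C = ⋃₀ (insert C m.1.1) := by
      rw [Set.sUnion_insert, Set.union_comm]
    rw [hBeq] at hmerge
    set q : α := ⟨(insert C m.1.1, m.1.2.1 ∪ (W₂ \ ⋃₀ m.1.1),
      fun x => if x ∈ m.1.2.1 then m.1.2.2 x else s₂ x),
      Set.insert_subset hC m.2.1, hmerge⟩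
    have hle : le m q :=
      ⟨Set.subset_insert _ _, Set.subset_union_left, fun x hx => if_pos hx⟩
    have := (hm q hle).1
    exact hCm (this (Set.mem_insert _ _))
  refine ⟨m.1.2.1, m.1.2.2, ?_⟩
  have h := m.2.2
  rw [hms] at h
  exact h

end BubbleUnionAux

/-- `bubb_D(v)` is closed under arbitrary unions; in particular it has a `⊆`-largest
element, namely `B_{v,D}`, the union of all `v`-bubbles. -/
theorem bubbles_closed_union {V : Type u} [Infinite V] (r : V) (D : Set (V × V))
    (hroot : IsRooted D r) (v : V) (hv : v ≠ r) :
    (∀ S ⊆ bubbles D r v, ⋃₀ S ∈ bubbles D r v) ∧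
      maxBubble D r v ∈ bubbles D r v ∧
      ∀ B ∈ bubbles D r v, B ⊆ maxBubble D r v := by
  have main : ∀ S ⊆ bubbles D r v, ⋃₀ S ∈ bubbles D r v := by
    intro S hS
    have h1 : ∀ C ∈ S, ∃ W s, Guide D v C W s := fun C hC =>
      IsBubble.toGuide (r := r) (hS hC)
    obtain ⟨W, s, hG⟩ := guide_sUnion h1
    have hr : r ∉ ⋃₀ S := by
      rintro ⟨C, hC, hrC⟩
      exact (hS hC).1 hrC
    exact hG.toBubble hr
  exact ⟨main, main _ subset_rfl, fun B hB => Set.subset_sUnion_of_mem hB⟩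

end FlamePaper
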